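/- Let k be a field of characteristic zero and A a finite-dimensional semisimple k-algebra. Then the bilinear trace form B : A × A → k defined by B(a,b) = trace of the k-linear endomorphism x ↦ a·b·x of A (the trace of left multiplication by a·b in the left regular representation) is nondegenerate: if a ∈ A satisfies B(a,b) = 0 for all b ∈ A, then a = 0. -/
import Mathlib

/-- For a finite-dimensional semisimple algebra `A` over a field `k` of
characteristic zero, the bilinear trace form
`B(a,b) = trace (x ↦ a·b·x)` (trace of left multiplication by `a·b` in the
left regular representation) is nondegenerate. -/
theorem trace_form_nondegenerate
    (k : Type*) [Field k] [CharZero k]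
    (A : Type*) [Ring A] [Algebra k A] [FiniteDimensional k A]
    [IsSemisimpleRing A]
    (a : A) (h : ∀ b : A, LinearMap.trace k A (LinearMap.mulLeft k (a * b)) = 0) :
    a = 0 := by
  classical
  -- the radical of the trace form, as a left ideal
  let I : Submodule A A :=
    { carrier := {x | ∀ b : A, LinearMap.trace k A (LinearMap.mulLeft k (x * b)) = 0}
      add_mem' := by
        intro x y hx hy b
        have : LinearMap.mulLeft k ((x + y) * b)
            = LinearMap.mulLeft k (x * b) + LinearMap.mulLeft k (y * b) := by
          ext z; simp [add_mul, mul_assoc]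
        rw [this, map_add, hx b, hy b, add_zero]
      zero_mem' := by
        intro b
        rw [zero_mul, LinearMap.mulLeft_zero_eq_zero, map_zero]
      smul_mem' := by
        intro c x hx b
        have : LinearMap.mulLeft k (c • x * b)
            = LinearMap.mulLeft k c ∘ₗ LinearMap.mulLeft k (x * b) := by
          rw [← LinearMap.mulLeft_mul]
          congr 1
          simp [mul_assoc]
        rw [this, LinearMap.trace_comp_comm', ← LinearMap.mulLeft_mul, mul_assoc]
        exact hx (b * c) }
  have ha : a ∈ I := h
  -- complement of I by semisimplicity
  obtain ⟨J, hJ⟩ := exists_isCompl I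
  have h1 : (1 : A) ∈ I ⊔ J := by rw [hJ.sup_eq_top]; trivial
  obtain ⟨e, he, f, hf, hef⟩ := Submodule.mem_sup.mp h1
  -- every x ∈ I satisfies x = x * e
  have key : ∀ x ∈ I, x = x * e := by
    intro x hx
    have hxf : x * f ∈ I ⊓ J := by
      constructor
      · have h2 : x * e + x * f = x := by rw [← mul_add, hef, mul_one]
        have : x * f = x - x * e := eq_sub_of_add_eq' h2
        rw [this]
        exact sub_mem hx (I.smul_mem x he)
      · exact J.smul_mem x hf
    rw [hJ.inf_eq_bot] at hxf
    have : x * f = 0 := hxf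
    have h2 : x * e + x * f = x := by rw [← mul_add, hef, mul_one]
    rw [this, add_zero] at h2
    exact h2.symm
  -- e is idempotent, so mulLeft e is a projection
  have hee : e * e = e := (key e he).symm
  have hproj : LinearMap.IsProj (LinearMap.range (LinearMap.mulLeft k e))
      (LinearMap.mulLeft k e) := by
    constructor
    · intro x; exact ⟨x, rfl⟩
    · rintro x ⟨y, rfl⟩
      simp only [LinearMap.mulLeft_apply, ← mul_assoc, hee]
  -- trace of the projection is its rank, but it is 0
  have htr : LinearMap.trace k A (LinearMap.mulLeft k e) = 0 := by
    have := he e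
    rwa [hee] at this
  rw [hproj.trace] at htr
  have hrank : Module.finrank k (LinearMap.range (LinearMap.mulLeft k e)) = 0 := by
    exact_mod_cast htr
  have hrange : LinearMap.range (LinearMap.mulLeft k e) = ⊥ :=
    Submodule.finrank_eq_zero.mp hrank
  have he0 : e = 0 := by
    have : LinearMap.mulLeft k e 1 ∈ LinearMap.range (LinearMap.mulLeft k e) := ⟨1, rfl⟩
    rw [hrange] at this
    simpa using this
  have := key a ha
  rw [he0, mul_zero] at this
  exact this
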